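/- arXiv:2602.04155 — 6 statements merged into one kernel-verified Lean document; each statement's English description precedes it below -/
import Mathlib

section
/- Let Θ be a convex subset of a real vector space, μ_1, …, μ_m probability measures on a measurable space Z, and ℓ : Θ × Z → ℝ such that for each z the map θ ↦ ℓ(θ, z) is convex, z ↦ ℓ(θ, z) is measurable and μ_g-integrable for every θ and g, and define R_g(θ) = ∫ ℓ(θ, z) dμ_g(z) and the risk set R(Θ) = {(R_1(θ), …, R_m(θ)) : θ ∈ Θ}. Then no point of conv(R(Θ)) \ R(Θ) is Pareto optimal in conv(R(Θ)) for minimization; that is, every point of the convex hull of the risk set that does not lie in the risk set is Pareto dominated by a point of the risk set. -/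
open MeasureTheory

/-- With convex-in-θ losses on a convex parameter set, every point of the
convex hull of the risk set that is not in the risk set is Pareto dominated (for
minimization) by a point of the risk set. -/
theorem convex_hull_no_pareto
    {V : Type*} [AddCommGroup V] [Module ℝ V]
    (Θ : Set V) (hΘ : Convex ℝ Θ)
    {Z : Type*} [MeasurableSpace Z]
    (m : ℕ) (μ : Fin m → Measure Z) (hprob : ∀ g, IsProbabilityMeasure (μ g))
    (ℓ : V → Z → ℝ)
    (hconv : ∀ z, ConvexOn ℝ Θ fun θ => ℓ θ z)
    (hmeas : ∀ θ, Measurable (ℓ θ))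
    (hint : ∀ θ ∈ Θ, ∀ g, Integrable (ℓ θ) (μ g))
    (RS : Set (Fin m → ℝ))
    (hRS : RS = (fun θ => fun g => ∫ z, ℓ θ z ∂(μ g)) '' Θ)
    (r : Fin m → ℝ) (hr : r ∈ convexHull ℝ RS) (hrn : r ∉ RS) :
    ∃ r' ∈ RS, (∀ g, r' g ≤ r g) ∧ ∃ g, r' g < r g := by
  classical
  subst hRS
  rw [convexHull_eq] at hr
  obtain ⟨ι, t, w, p, hw, hw1, hp, hcm⟩ := hr
  choose θfn hθmem hθeq using hp
  set q : ι → V := fun i => if h : i ∈ t then θfn i h else 0 with hq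
  have hqmem : ∀ i ∈ t, q i ∈ Θ := by
    intro i hi; simp only [hq, dif_pos hi]; exact hθmem i hi
  have hqeq : ∀ i ∈ t, (fun g => ∫ z, ℓ (q i) z ∂(μ g)) = p i := by
    intro i hi; simp only [hq, dif_pos hi]; exact hθeq i hi
  have hwpos : (0:ℝ) < ∑ i ∈ t, w i := by rw [hw1]; norm_num
  set θs : V := t.centerMass w q with hθs
  have hθsΘ : θs ∈ Θ := hΘ.centerMass_mem hw hwpos hqmem
  have hθssum : θs = ∑ i ∈ t, w i • q i := Finset.centerMass_eq_of_sum_1 _ _ hw1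
  set r' : Fin m → ℝ := fun g => ∫ z, ℓ θs z ∂(μ g) with hr'
  have hr'RS : r' ∈ (fun θ => fun g => ∫ z, ℓ θ z ∂(μ g)) '' Θ := ⟨θs, hθsΘ, rfl⟩
  have hle : ∀ g, r' g ≤ r g := by
    intro g
    have hrg : r g = ∑ i ∈ t, w i * p i g := by
      rw [← hcm, Finset.centerMass_eq_of_sum_1 _ _ hw1]
      simp [Finset.sum_apply]
    have hpt : ∀ z, ℓ θs z ≤ ∑ i ∈ t, w i * ℓ (q i) z := by
      intro z
      calc ℓ θs z ≤ t.centerMass w ((fun θ => ℓ θ z) ∘ q) :=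
            (hconv z).map_centerMass_le hw hwpos hqmem
        _ = ∑ i ∈ t, w i * ℓ (q i) z := by
            rw [Finset.centerMass_eq_of_sum_1 _ _ hw1]; simp [smul_eq_mul]
    have hint1 : Integrable (ℓ θs) (μ g) := hint θs hθsΘ g
    have hint2 : Integrable (fun z => ∑ i ∈ t, w i * ℓ (q i) z) (μ g) :=
      integrable_finset_sum t fun i hi => ((hint (q i) (hqmem i hi) g).const_mul _)
    have hmono : ∫ z, ℓ θs z ∂(μ g) ≤ ∫ z, (∑ i ∈ t, w i * ℓ (q i) z) ∂(μ g) :=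
      integral_mono hint1 hint2 hpt
    have hsum : ∫ z, (∑ i ∈ t, w i * ℓ (q i) z) ∂(μ g)
        = ∑ i ∈ t, w i * ∫ z, ℓ (q i) z ∂(μ g) := by
      rw [integral_finset_sum t fun i hi => ((hint (q i) (hqmem i hi) g).const_mul _)]
      exact Finset.sum_congr rfl fun i hi => integral_const_mul _ _
    rw [hrg, hr']
    calc ∫ z, ℓ θs z ∂(μ g) ≤ ∑ i ∈ t, w i * ∫ z, ℓ (q i) z ∂(μ g) := by
          rw [← hsum]; exact hmono
      _ = ∑ i ∈ t, w i * p i g := by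
          refine Finset.sum_congr rfl fun i hi => ?_
          rw [← hqeq i hi]
  refine ⟨r', hr'RS, hle, ?_⟩
  by_contra h
  push_neg at h
  apply hrn
  have : r = r' := funext fun g => le_antisymm (h g) (hle g)
  rw [this]; exact hr'RS
end

section
/- Let Θ be a convex subset of a real vector space and R_1, …, R_m : Θ → ℝ strictly convex functions with risk set R(Θ) = {(R_1(θ), …, R_m(θ)) : θ ∈ Θ}. Then no point of conv(R(Θ)) \ R(Θ) is weakly Pareto optimal in conv(R(Θ)): every point of the convex hull of the risk set that does not lie in the risk set is strictly dominated in every coordinate by some point of the risk set. -/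
/-- With strictly convex risk functions on a convex set Θ, every point of
the convex hull of the risk set that is not in the risk set is strictly dominated in
every coordinate by a point of the risk set (hence is not weakly Pareto optimal). -/
theorem convex_hull_no_weak_pareto
    {V : Type*} [AddCommGroup V] [Module ℝ V]
    (Θ : Set V) (hΘ : Convex ℝ Θ)
    (m : ℕ) (R : Fin m → V → ℝ)
    (hsc : ∀ g, StrictConvexOn ℝ Θ (R g))
    (RS : Set (Fin m → ℝ))
    (hRS : RS = (fun θ => fun g => R g θ) '' Θ)
    (r : Fin m → ℝ) (hr : r ∈ convexHull ℝ RS) (hrn : r ∉ RS) :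
    ∃ r' ∈ RS, ∀ g, r' g < r g := by
  classical
  subst hRS
  rw [convexHull_eq] at hr
  obtain ⟨ι, t, w, z, hw0, hw1, hzs, hcm⟩ := hr
  rw [Finset.centerMass_eq_of_sum_1 _ _ hw1] at hcm
  set t' := t.filter (fun i => w i ≠ 0) with ht'
  have hsub : t' ⊆ t := Finset.filter_subset _ _
  have hw1' : ∑ i ∈ t', w i = 1 := by
    rw [ht', Finset.sum_filter_ne_zero]; exact hw1
  have hw0' : ∀ i ∈ t', 0 < w i := by
    intro i hi
    rw [ht', Finset.mem_filter] at hi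
    exact lt_of_le_of_ne (hw0 i hi.1) (Ne.symm hi.2)
  have hcm' : ∑ i ∈ t', w i • z i = r := by
    rw [← hcm, ht']
    exact Finset.sum_filter_of_ne (fun i hi h hw => h (by rw [hw, zero_smul]))
  -- choose parameters
  have hex : ∀ i ∈ t', ∃ θ ∈ Θ, (fun g => R g θ) = z i := by
    intro i hi
    obtain ⟨θ, hθ, hθz⟩ := hzs i (hsub hi)
    exact ⟨θ, hθ, hθz⟩
  set p : ι → V := fun i =>
    if h : ∃ θ ∈ Θ, (fun g => R g θ) = z i then h.choose else 0 with hp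
  have hpΘ : ∀ i ∈ t', p i ∈ Θ := by
    intro i hi
    have h := hex i hi
    simp only [hp, dif_pos h]
    exact h.choose_spec.1
  have hpz : ∀ i ∈ t', (fun g => R g (p i)) = z i := by
    intro i hi
    have h := hex i hi
    simp only [hp, dif_pos h]
    exact h.choose_spec.2
  have ht'ne : t'.Nonempty := by
    by_contra h
    rw [Finset.not_nonempty_iff_eq_empty] at h
    rw [h, Finset.sum_empty] at hw1'
    norm_num at hw1'
  obtain ⟨i0, hi0⟩ := ht'ne
  by_cases hconst : ∀ i ∈ t', p i = p i0
  · exfalso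
    apply hrn
    refine ⟨p i0, hpΘ i0 hi0, ?_⟩
    have : r = z i0 := by
      rw [← hcm']
      have hz : ∀ i ∈ t', w i • z i = w i • z i0 := by
        intro i hi
        rw [← hpz i hi, hconst i hi, hpz i0 hi0]
      rw [Finset.sum_congr rfl hz, ← Finset.sum_smul, hw1', one_smul]
    rw [this]; exact hpz i0 hi0
  · push_neg at hconst
    obtain ⟨j, hj, hjne⟩ := hconst
    set θs : V := ∑ i ∈ t', w i • p i with hθs
    have hθsΘ : θs ∈ Θ := hΘ.sum_mem (fun i hi => (hw0' i hi).le) hw1' hpΘ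
    refine ⟨fun g => R g θs, ⟨θs, hθsΘ, rfl⟩, ?_⟩
    intro g
    have hlt : R g θs < ∑ i ∈ t', w i • R g (p i) :=
      (hsc g).map_sum_lt hw0' hw1' hpΘ ⟨j, hj, i0, hi0, hjne⟩
    have hr : r g = ∑ i ∈ t', w i • R g (p i) := by
      rw [← hcm']
      rw [Finset.sum_apply]
      refine Finset.sum_congr rfl fun i hi => ?_
      rw [← hpz i hi]
      simp
    rw [hr]
    exact hlt
end

section
/- Let Ω be a nonempty compact convex subset of ℝ² with projection [a, b] onto the first coordinate, let φ(x) = max{y : (x, y) ∈ Ω}, let M = max_{x ∈ [a,b]} φ(x), and let c = max{x ∈ [a, b] : φ(x) = M}. Then for every x ∈ [c, b], the point (x, φ(x)) is Pareto optimal in Ω for maximization. -/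
/-- For a nonempty compact convex Ω ⊆ ℝ² with projection [a,b] and upper
boundary φ, if M is the maximum of φ on [a,b] and c is the largest maximizer, then for
every x ∈ [c, b] the point (x, φ(x)) is Pareto optimal in Ω for maximization. -/
theorem upper_boundary_pareto
    (Ω : Set (ℝ × ℝ)) (hne : Ω.Nonempty) (hcomp : IsCompact Ω) (hconv : Convex ℝ Ω)
    (a b : ℝ) (hproj : Prod.fst '' Ω = Set.Icc a b)
    (φ : ℝ → ℝ)
    (hφ : ∀ x ∈ Set.Icc a b, IsGreatest {y | (x, y) ∈ Ω} (φ x))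
    (M : ℝ) (hM : IsGreatest (φ '' Set.Icc a b) M)
    (c : ℝ) (hc : IsGreatest {x ∈ Set.Icc a b | φ x = M} c)
    (x : ℝ) (hx : x ∈ Set.Icc c b) :
    (x, φ x) ∈ Ω ∧ ¬ ∃ p ∈ Ω, x ≤ p.1 ∧ φ x ≤ p.2 ∧ (x < p.1 ∨ φ x < p.2) := by
  obtain ⟨⟨hcab, hφcM⟩, hc2⟩ := hc
  have hxab : x ∈ Set.Icc a b := ⟨le_trans hcab.1 hx.1, hx.2⟩
  have hxΩ : (x, φ x) ∈ Ω := (hφ x hxab).1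
  refine ⟨hxΩ, ?_⟩
  rintro ⟨p, hp, hxp, hyp, hstrict⟩
  have hp1 : p.1 ∈ Set.Icc a b := by
    rw [← hproj]; exact ⟨p, hp, rfl⟩
  have hp2 : p.2 ≤ φ p.1 := (hφ p.1 hp1).2 (by simpa using hp)
  rcases eq_or_lt_of_le hxp with heq | hlt
  · rcases hstrict with h | h
    · exact absurd heq (ne_of_lt h)
    · rw [← heq] at hp2; linarith
  · -- x < p.1
    have hφp_le : φ p.1 ≤ M := hM.2 ⟨p.1, hp1, rfl⟩
    have hφpM : φ p.1 < M := by
      rcases eq_or_lt_of_le hφp_le with h | h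
      · have := hc2 ⟨hp1, h⟩
        linarith [hx.1]
      · exact h
    have hφxφp : φ x ≤ φ p.1 := le_trans hyp hp2
    rcases eq_or_lt_of_le hx.1 with hxc | hcx
    · rw [hxc] at hφcM; linarith
    · -- c < x < p.1 : use convexity
      set t : ℝ := (x - c) / (p.1 - c) with ht
      have hpc : 0 < p.1 - c := by linarith
      have ht0 : 0 < t := div_pos (by linarith) hpc
      have ht1 : t < 1 := (div_lt_one hpc).mpr (by linarith)
      have hcΩ : (c, φ c) ∈ Ω := (hφ c hcab).1
      have hpΩ : (p.1, φ p.1) ∈ Ω := (hφ p.1 hp1).1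
      have hmem := hconv hcΩ hpΩ (by linarith : (0:ℝ) ≤ 1 - t) (le_of_lt ht0)
        (by ring)
      have hx1 : (1 - t) * c + t * p.1 = x := by
        rw [ht]
        field_simp
        ring
      have hmem' : (x, (1 - t) * φ c + t * φ p.1) ∈ Ω := by
        have : ((1 - t) • ((c, φ c) : ℝ × ℝ) + t • (p.1, φ p.1)) =
            (x, (1 - t) * φ c + t * φ p.1) := by
          simp [Prod.ext_iff, smul_eq_mul, hx1]
        rwa [this] at hmem
      have hle : (1 - t) * φ c + t * φ p.1 ≤ φ x := (hφ x hxab).2 hmem'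
      rw [hφcM] at hle
      nlinarith
end

section
/- Let Ω be a nonempty compact convex subset of ℝ² with Ω ⊆ {(x, y) : x ≤ 1 and y ≤ 1}, and suppose there exist c, c' < 1 with (1, c) ∈ Ω and (c', 1) ∈ Ω. Then there exists a unique ρ* ∈ ℝ such that (ρ*, ρ*) ∈ Ω and (ρ*, ρ*) is Pareto optimal in Ω for maximization; moreover ρ* = max_{(x,y) ∈ Ω} min(x, y), i.e., the equal-coordinate Pareto optimal point is exactly the maximin point of Ω. -/
lemma ks_diag_helper (Ω : Set (ℝ × ℝ)) (hconv : Convex ℝ Ω)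
    (a b q : ℝ) (hb1 : b ≤ 1) (hmem : (a, b) ∈ Ω) (hq : q < 1) (hq2 : (q, 1) ∈ Ω)
    (hba : b ≤ a) :
    ∃ t, (t, t) ∈ Ω ∧ b ≤ t ∧ (b < a → b < 1 → b < t) := by
  set d := a - b with hd
  set e := 1 - q with he
  have hd0 : 0 ≤ d := by simp [hd]; linarith
  have he0 : 0 < e := by simp [he]; linarith
  have hde : 0 < d + e := by linarith
  set s := d / (d + e) with hs
  have hs0 : 0 ≤ s := div_nonneg hd0 hde.le
  have hs1 : s ≤ 1 := by rw [hs, div_le_one hde]; linarith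
  have key : (1 - s) * a + s * q = (1 - s) * b + s * 1 := by
    rw [hs]; field_simp; ring
  refine ⟨(1 - s) * b + s * 1, ?_, ?_, ?_⟩
  · have hmem2 := hconv hmem hq2 (by linarith : (0:ℝ) ≤ 1 - s) hs0 (by ring)
    have heq : (1 - s) • ((a, b) : ℝ × ℝ) + s • ((q, 1) : ℝ × ℝ)
        = ((1 - s) * b + s * 1, (1 - s) * b + s * 1) := by
      simp [Prod.ext_iff, Prod.smul_def, smul_eq_mul]
      linarith [key]
    rwa [heq] at hmem2
  · nlinarith [mul_nonneg hs0 (by linarith : (0:ℝ) ≤ 1 - b)]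
  · intro hlt hb
    have hspos : 0 < s := by
      rw [hs]; exact div_pos (by simp [hd]; linarith) hde
    nlinarith [mul_pos hspos (by linarith : (0:ℝ) < 1 - b)]


/-- Two-group Kalai–Smorodinsky in relative improvement space. For a
nonempty compact convex Ω ⊆ ℝ² bounded above by (1,1) and containing points (1, c) and
(c', 1) with c, c' < 1, there is a unique ρ* with (ρ*, ρ*) ∈ Ω Pareto optimal for
maximization; moreover ρ* is the maximum over Ω of min(x, y). -/
theorem ks_two_player
    (Ω : Set (ℝ × ℝ)) (hne : Ω.Nonempty) (hcomp : IsCompact Ω) (hconv : Convex ℝ Ω)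
    (hub : ∀ p ∈ Ω, p.1 ≤ 1 ∧ p.2 ≤ 1)
    (c c' : ℝ) (hc : c < 1) (hc' : c' < 1)
    (h1 : (1, c) ∈ Ω) (h2 : (c', 1) ∈ Ω) :
    ∃ ρ : ℝ,
      ((ρ, ρ) ∈ Ω ∧ ¬ ∃ p ∈ Ω, ρ ≤ p.1 ∧ ρ ≤ p.2 ∧ (ρ < p.1 ∨ ρ < p.2)) ∧
      (∀ ρ' : ℝ,
        ((ρ', ρ') ∈ Ω ∧ ¬ ∃ p ∈ Ω, ρ' ≤ p.1 ∧ ρ' ≤ p.2 ∧ (ρ' < p.1 ∨ ρ' < p.2)) →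
        ρ' = ρ) ∧
      IsGreatest ((fun p : ℝ × ℝ => min p.1 p.2) '' Ω) ρ := by
  -- the swapped set
  set Ω' : Set (ℝ × ℝ) := (fun p : ℝ × ℝ => (p.2, p.1)) ⁻¹' Ω with hΩ'
  have hconv' : Convex ℝ Ω' :=
    hconv.linear_preimage ((LinearEquiv.prodComm ℝ ℝ ℝ).toLinearMap)
  have hswap : ∀ x y : ℝ, (x, y) ∈ Ω ↔ (y, x) ∈ Ω' := by
    intro x y; simp [hΩ']
  -- general diagonal lemma
  have hdiag : ∀ p ∈ Ω, ∃ t, (t, t) ∈ Ω ∧ min p.1 p.2 ≤ t ∧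
      (min p.1 p.2 < max p.1 p.2 → min p.1 p.2 < 1 → min p.1 p.2 < t) := by
    intro p hp
    rcases le_total p.2 p.1 with hle | hle
    · obtain ⟨t, ht, hbt, hst⟩ := ks_diag_helper Ω hconv p.1 p.2 c'
        (hub p hp).2 hp hc' h2 hle
      exact ⟨t, ht, by simpa [min_eq_right hle] using hbt, by
        intro h1' h2'
        rw [min_eq_right hle] at h1' h2' ⊢
        exact hst (by rw [max_eq_left hle] at h1'; exact h1') h2'⟩
    · obtain ⟨t, ht, hbt, hst⟩ := ks_diag_helper Ω' hconv' p.2 p.1 c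
        (hub p hp).1 ((hswap p.1 p.2).mp hp) hc ((hswap 1 c).mp h1) hle
      refine ⟨t, (hswap t t).mpr ht, by simpa [min_eq_left hle] using hbt, ?_⟩
      intro h1' h2'
      rw [min_eq_left hle] at h1' h2' ⊢
      exact hst (by rw [max_eq_right hle] at h1'; exact h1') h2'
  -- the diagonal slice
  set D : Set ℝ := {t : ℝ | (t, t) ∈ Ω} with hD
  have hDne : D.Nonempty := by
    obtain ⟨t, ht, _, _⟩ := hdiag (1, c) h1
    exact ⟨t, ht⟩
  have hDclosed : IsClosed D := by
    have : Continuous fun t : ℝ => ((t, t) : ℝ × ℝ) := by fun_prop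
    exact hcomp.isClosed.preimage this
  have hDbdd : BddAbove D := ⟨1, fun t ht => (hub _ ht).1⟩
  set ρ := sSup D with hρ
  have hρmem : ρ ∈ D := hDclosed.csSup_mem hDne hDbdd
  have hρmax : ∀ t ∈ D, t ≤ ρ := fun t ht => le_csSup hDbdd ht
  -- key bound: min over Ω ≤ ρ
  have hmin : ∀ p ∈ Ω, min p.1 p.2 ≤ ρ := by
    intro p hp
    obtain ⟨t, ht, hmt, _⟩ := hdiag p hp
    exact hmt.trans (hρmax t ht)
  have hρ1 : ρ ≤ 1 := (hub _ hρmem).1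
  -- Pareto optimality
  have hpareto : ¬ ∃ p ∈ Ω, ρ ≤ p.1 ∧ ρ ≤ p.2 ∧ (ρ < p.1 ∨ ρ < p.2) := by
    rintro ⟨p, hp, hp1, hp2, hor⟩
    obtain ⟨t, ht, hmt, hst⟩ := hdiag p hp
    have htρ : t ≤ ρ := hρmax t ht
    have hminρ : min p.1 p.2 = ρ := le_antisymm (hmin p hp) (le_min hp1 hp2)
    have hmm : min p.1 p.2 < max p.1 p.2 := by
      rcases hor with h | h
      · have : p.2 = ρ := by
          by_contra hne'
          have : ρ < min p.1 p.2 := lt_min h (lt_of_le_of_ne hp2 (Ne.symm hne'))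
          linarith [hminρ]
        calc min p.1 p.2 = ρ := hminρ
          _ < p.1 := h
          _ ≤ max p.1 p.2 := le_max_left _ _
      · have : p.1 = ρ := by
          by_contra hne'
          have : ρ < min p.1 p.2 := lt_min (lt_of_le_of_ne hp1 (Ne.symm hne')) h
          linarith [hminρ]
        calc min p.1 p.2 = ρ := hminρ
          _ < p.2 := h
          _ ≤ max p.1 p.2 := le_max_right _ _
    have hlt1 : min p.1 p.2 < 1 := by
      have := (hub p hp).1
      have := (hub p hp).2
      rcases max_cases p.1 p.2 with ⟨hm, _⟩ | ⟨hm, _⟩ <;> [linarith [hmm]; linarith [hmm]]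
    have := hst hmm hlt1
    rw [hminρ] at this
    linarith
  refine ⟨ρ, ⟨hρmem, hpareto⟩, ?_, ?_⟩
  · rintro ρ' ⟨hmem', hpar'⟩
    have hle : ρ' ≤ ρ := hρmax ρ' hmem'
    rcases eq_or_lt_of_le hle with h | h
    · exact h
    · exact absurd ⟨(ρ, ρ), hρmem, h.le, h.le, Or.inl h⟩ hpar'
  · constructor
    · exact ⟨(ρ, ρ), hρmem, by simp⟩
    · rintro m ⟨p, hp, rfl⟩
      exact hmin p hp
end

section
/- Let G be a nonempty finite index set, F a set, and R_g : F → ℝ for each g ∈ G. Let f₀ ∈ F and, for each g, let f_g* ∈ F satisfy R_g(f_g*) ≤ R_g(f) for all f ∈ F and R_g(f₀) > R_g(f_g*). Define the relative improvement ρ_g(f) = (R_g(f₀) − R_g(f)) / (R_g(f₀) − R_g(f_g*)). If f_RI ∈ F satisfies min_{g ∈ G} ρ_g(f_RI) ≥ min_{g ∈ G} ρ_g(f) for all f ∈ F, then R_g(f_RI) ≤ R_g(f₀) for every g ∈ G. -/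
/-- No-harm guarantee. Any maximizer of the worst-group relative
improvement performs at least as well as the baseline f₀ for every group. -/
theorem no_harm
    {G : Type*} [Fintype G] [Nonempty G] {F : Type*}
    (R : G → F → ℝ) (f0 : F) (fstar : G → F)
    (hopt : ∀ g f, R g (fstar g) ≤ R g f)
    (hgap : ∀ g, R g (fstar g) < R g f0)
    (ρ : G → F → ℝ)
    (hρ : ∀ g f, ρ g f = (R g f0 - R g f) / (R g f0 - R g (fstar g)))
    (fRI : F)
    (hRI : ∀ f, Finset.univ.inf' Finset.univ_nonempty (fun g => ρ g f) ≤
        Finset.univ.inf' Finset.univ_nonempty (fun g => ρ g fRI)) :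
    ∀ g, R g fRI ≤ R g f0 := by
  intro g
  have h0 : (0:ℝ) ≤ Finset.univ.inf' Finset.univ_nonempty (fun g => ρ g fRI) := by
    refine le_trans ?_ (hRI f0)
    apply Finset.le_inf'
    intro b _
    rw [hρ]
    simp
  have hg : (0:ℝ) ≤ ρ g fRI :=
    le_trans h0 (Finset.inf'_le _ (Finset.mem_univ g))
  rw [hρ] at hg
  have hd : 0 < R g f0 - R g (fstar g) := sub_pos.mpr (hgap g)
  have := (div_nonneg_iff.mp hg)
  rcases this with ⟨h1, _⟩ | ⟨_, h2⟩
  · linarith [sub_nonneg.mp h1]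
  · linarith
end

section
/- Let G be a nonempty finite index set, F a set, and R_g, R̂_g : F → ℝ for each g ∈ G. Let f₀ ∈ F; for each g let f_g* ∈ F minimize R_g over F and f̂_g* ∈ F minimize R̂_g over F; define ρ_g(f) = (R_g(f₀) − R_g(f)) / (R_g(f₀) − R_g(f_g*)) and ρ̂_g(f) = (R̂_g(f₀) − R̂_g(f)) / (R̂_g(f₀) − R̂_g(f̂_g*)). Let f_RI maximize min_{g} ρ_g over F and f̂_RI maximize min_{g} ρ̂_g over F. Set Δ = min_{g ∈ G} (R_g(f₀) − R_g(f_g*)) and suppose Δ > 0, and suppose ε ≥ 0 satisfies ε ≤ Δ/8 and sup_{f ∈ F} |R̂_g(f) − R_g(f)| ≤ ε for every g ∈ G. Then min_{g ∈ G} ρ_g(f̂_RI) ≥ min_{g ∈ G} ρ_g(f_RI) − 12ε/Δ. -/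
/-- Auxiliary arithmetic lemma A: bounding population ratio below by empirical ratio. -/
lemma aux_ratio_A (N Nh D Dh Δ ε : ℝ) (hΔ : 0 < Δ) (hε : 0 ≤ ε) (hεΔ : ε ≤ Δ / 8)
    (hΔD : Δ ≤ D) (hDh_lb : D - 2 * ε ≤ Dh) (hNh0 : 0 ≤ Nh) (hNhD : Nh ≤ Dh)
    (hN : Nh - 2 * ε ≤ N) : Nh / Dh - 4 * ε / Δ ≤ N / D := by
  have hD : 0 < D := lt_of_lt_of_le hΔ hΔD
  have hDh : 0 < Dh := by linarith
  have h1 : Nh / Dh ≤ N / D + 4 * ε / Δ := by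
    rw [div_add_div _ _ (ne_of_gt hD) (ne_of_gt hΔ), div_le_div_iff₀ hDh (by positivity)]
    nlinarith [mul_nonneg (mul_nonneg hNh0 hΔ.le) (by linarith : (0:ℝ) ≤ Dh - D + 2 * ε),
      mul_nonneg (mul_nonneg hε hDh.le) (by linarith : (0:ℝ) ≤ D - Δ),
      mul_nonneg (mul_nonneg hε hΔ.le) (by linarith : (0:ℝ) ≤ Dh - Nh),
      mul_nonneg (mul_nonneg hΔ.le hDh.le) (by linarith : (0:ℝ) ≤ N - (Nh - 2 * ε))]
  linarith

/-- Auxiliary arithmetic lemma B: bounding empirical ratio below by population ratio. -/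
lemma aux_ratio_B (N Nh D Dh Δ ε : ℝ) (hΔ : 0 < Δ) (hε : 0 ≤ ε) (hεΔ : ε ≤ Δ / 8)
    (hΔD : Δ ≤ D) (hDh34 : 3 * Δ / 4 ≤ Dh) (hDDh : Dh ≤ D + 2 * ε)
    (hN0 : 0 ≤ N) (hND : N ≤ D) (hNh : N - 2 * ε ≤ Nh) :
    N / D - 16 * ε / (3 * Δ) ≤ Nh / Dh := by
  have hD : 0 < D := lt_of_lt_of_le hΔ hΔD
  have hDh : 0 < Dh := by linarith
  have h1 : N / D ≤ Nh / Dh + 16 * ε / (3 * Δ) := by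
    rw [div_add_div _ _ (ne_of_gt hDh) (by positivity : (3 : ℝ) * Δ ≠ 0),
      div_le_div_iff₀ hD (by positivity)]
    nlinarith [mul_nonneg (mul_nonneg hN0 hΔ.le) (by linarith : (0:ℝ) ≤ D - Dh + 2 * ε),
      mul_nonneg (mul_nonneg hε hΔ.le) (by linarith : (0:ℝ) ≤ D - N),
      mul_nonneg (mul_nonneg hε hD.le) (by linarith : (0:ℝ) ≤ Dh - 3 * Δ / 4),
      mul_nonneg (mul_nonneg hΔ.le hD.le) (by linarith : (0:ℝ) ≤ Nh - (N - 2 * ε))]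
  linarith

/-- Deterministic core of the convergence rate theorem. If empirical
risks are uniformly within ε ≤ Δ/8 of the population risks, then the empirical maximin
relative improvement solution is within 12ε/Δ of the population maximin value. -/
theorem empirical_maximin_rate
    {G : Type*} [Fintype G] [Nonempty G] {F : Type*}
    (R Rhat : G → F → ℝ) (f0 : F) (fstar fhatstar : G → F)
    (hopt : ∀ g f, R g (fstar g) ≤ R g f)
    (hhatopt : ∀ g f, Rhat g (fhatstar g) ≤ Rhat g f)
    (ρ ρhat : G → F → ℝ)
    (hρ : ∀ g f, ρ g f = (R g f0 - R g f) / (R g f0 - R g (fstar g)))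
    (hρhat : ∀ g f,
      ρhat g f = (Rhat g f0 - Rhat g f) / (Rhat g f0 - Rhat g (fhatstar g)))
    (fRI fhatRI : F)
    (hRI : ∀ f, Finset.univ.inf' Finset.univ_nonempty (fun g => ρ g f) ≤
        Finset.univ.inf' Finset.univ_nonempty (fun g => ρ g fRI))
    (hhatRI : ∀ f, Finset.univ.inf' Finset.univ_nonempty (fun g => ρhat g f) ≤
        Finset.univ.inf' Finset.univ_nonempty (fun g => ρhat g fhatRI))
    (Δ : ℝ)
    (hΔdef : Δ = Finset.univ.inf' Finset.univ_nonempty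
      (fun g => R g f0 - R g (fstar g)))
    (hΔ : 0 < Δ)
    (ε : ℝ) (hε0 : 0 ≤ ε) (hεΔ : ε ≤ Δ / 8)
    (hdev : ∀ g f, |Rhat g f - R g f| ≤ ε) :
    Finset.univ.inf' Finset.univ_nonempty (fun g => ρ g fRI) - 12 * ε / Δ ≤
      Finset.univ.inf' Finset.univ_nonempty (fun g => ρ g fhatRI) := by
  -- basic per-group facts
  have hΔD : ∀ g, Δ ≤ R g f0 - R g (fstar g) := by
    intro g
    rw [hΔdef]
    exact Finset.inf'_le _ (Finset.mem_univ g)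
  have hdev' : ∀ g f, R g f - ε ≤ Rhat g f ∧ Rhat g f ≤ R g f + ε := by
    intro g f
    have := abs_le.mp (hdev g f)
    constructor <;> linarith [this.1, this.2]
  have hDh_lb : ∀ g, (R g f0 - R g (fstar g)) - 2 * ε ≤
      Rhat g f0 - Rhat g (fhatstar g) := by
    intro g
    have h1 := (hdev' g f0).1
    have h2 := (hdev' g (fstar g)).2
    have h3 := hhatopt g (fstar g)
    linarith
  have hDh_ub : ∀ g, Rhat g f0 - Rhat g (fhatstar g) ≤
      (R g f0 - R g (fstar g)) + 2 * ε := by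
    intro g
    have h1 := (hdev' g f0).2
    have h2 := (hdev' g (fhatstar g)).1
    have h3 := hopt g (fhatstar g)
    linarith
  have hDhpos : ∀ g, 0 < Rhat g f0 - Rhat g (fhatstar g) := by
    intro g
    have := hDh_lb g
    have := hΔD g
    linarith
  -- values at f0 are zero
  have hρ0 : ∀ g, ρ g f0 = 0 := by
    intro g; rw [hρ]; simp
  have hρhat0 : ∀ g, ρhat g f0 = 0 := by
    intro g; rw [hρhat]; simp
  have hinfρ0 : Finset.univ.inf' Finset.univ_nonempty (fun g => ρ g f0) = 0 := by
    have : (fun g : G => ρ g f0) = fun _ => (0 : ℝ) := funext hρ0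
    rw [this, Finset.inf'_const]
  have hinfρhat0 : Finset.univ.inf' Finset.univ_nonempty (fun g => ρhat g f0) = 0 := by
    have : (fun g : G => ρhat g f0) = fun _ => (0 : ℝ) := funext hρhat0
    rw [this, Finset.inf'_const]
  -- nonnegativity of the maximin solutions
  have hρRI0 : ∀ g, 0 ≤ ρ g fRI := by
    intro g
    have h1 := hRI f0
    rw [hinfρ0] at h1
    have h2 : Finset.univ.inf' Finset.univ_nonempty (fun g => ρ g fRI) ≤ ρ g fRI :=
      Finset.inf'_le _ (Finset.mem_univ g)
    linarith
  have hρhatRI0 : ∀ g, 0 ≤ ρhat g fhatRI := by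
    intro g
    have h1 := hhatRI f0
    rw [hinfρhat0] at h1
    have h2 : Finset.univ.inf' Finset.univ_nonempty (fun g => ρhat g fhatRI) ≤
        ρhat g fhatRI := Finset.inf'_le _ (Finset.mem_univ g)
    linarith
  -- pointwise comparison at fhatRI (lemma A)
  have hA : ∀ g, ρhat g fhatRI - 4 * ε / Δ ≤ ρ g fhatRI := by
    intro g
    rw [hρ, hρhat]
    apply aux_ratio_A _ _ _ _ _ _ hΔ hε0 hεΔ (hΔD g) (hDh_lb g)
    · -- 0 ≤ numerator of ρhat at fhatRI
      have h := hρhatRI0 g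
      rw [hρhat] at h
      have := (le_div_iff₀ (hDhpos g)).mp h
      linarith
    · have := hhatopt g fhatRI
      linarith
    · have h1 := (hdev' g f0).2
      have h2 := (hdev' g fhatRI).1
      linarith
  -- pointwise comparison at fRI (lemma B)
  have hB : ∀ g, ρ g fRI - 16 * ε / (3 * Δ) ≤ ρhat g fRI := by
    intro g
    rw [hρ, hρhat]
    apply aux_ratio_B _ _ _ _ _ _ hΔ hε0 hεΔ (hΔD g)
    · have := hDh_lb g; have := hΔD g; linarith
    · exact hDh_ub g
    · have h := hρRI0 g
      rw [hρ] at h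
      have hD : 0 < R g f0 - R g (fstar g) := lt_of_lt_of_le hΔ (hΔD g)
      have := (le_div_iff₀ hD).mp h
      linarith
    · have := hopt g fRI; linarith
    · have h1 := (hdev' g f0).1
      have h2 := (hdev' g fRI).2
      linarith
  -- combine via inf'
  have step1 : Finset.univ.inf' Finset.univ_nonempty (fun g => ρhat g fhatRI)
      - 4 * ε / Δ ≤ Finset.univ.inf' Finset.univ_nonempty (fun g => ρ g fhatRI) := by
    apply Finset.le_inf'
    intro g _
    have h1 : Finset.univ.inf' Finset.univ_nonempty (fun g => ρhat g fhatRI) ≤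
        ρhat g fhatRI := Finset.inf'_le _ (Finset.mem_univ g)
    have := hA g
    linarith
  have step2 : Finset.univ.inf' Finset.univ_nonempty (fun g => ρ g fRI)
      - 16 * ε / (3 * Δ) ≤
        Finset.univ.inf' Finset.univ_nonempty (fun g => ρhat g fRI) := by
    apply Finset.le_inf'
    intro g _
    have h1 : Finset.univ.inf' Finset.univ_nonempty (fun g => ρ g fRI) ≤
        ρ g fRI := Finset.inf'_le _ (Finset.mem_univ g)
    have := hB g
    linarith
  have step3 := hhatRI fRI
  have harith : 4 * ε / Δ + 16 * ε / (3 * Δ) ≤ 12 * ε / Δ := by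
    have hq : 0 ≤ ε / Δ := div_nonneg hε0 hΔ.le
    have e1 : 16 * ε / (3 * Δ) = (16 / 3) * (ε / Δ) := by ring
    have e2 : 4 * ε / Δ = 4 * (ε / Δ) := by ring
    have e3 : 12 * ε / Δ = 12 * (ε / Δ) := by ring
    rw [e1, e2, e3]
    linarith
  linarith
end
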